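/- Fix an integer g ≥ 1 and a point a⃗ = (a_1, …, a_g) ∈ ℂ^g with det B(a⃗) ≠ 0. Then there exists a unique pair (p, b) of polynomials in ℂ[t] such that: p has degree ≤ g and constant term 1; b has the form b(t) = 1 + Σ_{j=1}^{g−1} b_j t^{2j}; and p(t) ≡ f_g(t; a⃗)·b(t) modulo t^{2g}, where f_g(t; a⃗) := Σ_{n=0}^{2g−1} χ_n(a⃗) t^n. Moreover, the coefficient vector (p_0, p_1, …, p_g) of p equals A(a⃗)·c⃗, where c⃗ ∈ ℂ^g is the vector whose first entry is 1 and whose remaining g−1 entries form the vector −B(a⃗)^{−1}·φ(a⃗). -/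

import Mathlib

/-- `exp` of a formal power series (with zero constant term), defined coefficientwise:
the coefficient of `t^n` in `∑ₘ s^m / m!`.  (For `s` with zero constant term only the
terms with `m ≤ n` contribute.) -/
noncomputable def expPS (s : PowerSeries ℂ) : PowerSeries ℂ :=
  PowerSeries.mk fun n => ∑ m ∈ Finset.range (n + 1),
    ((m.factorial : ℂ))⁻¹ * PowerSeries.coeff n (s ^ m)

/-- The series `∑_{i=1}^g a_i t^{2i-1}` (with `a : Fin g → ℂ`, `a i = a_{i+1}`). -/
noncomputable def genSer (g : ℕ) (a : Fin g → ℂ) : PowerSeries ℂ :=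
  ∑ i : Fin g, PowerSeries.monomial (2 * (i : ℕ) + 1) (a i)

/-- `χ_n(a)` : the coefficient of `t^n` in `exp(∑_{i=1}^g a_i t^{2i-1})`, with `χ_n = 0`
for `n < 0`. -/
noncomputable def chi (g : ℕ) (a : Fin g → ℂ) (n : ℤ) : ℂ :=
  if 0 ≤ n then PowerSeries.coeff n.toNat (expPS (genSer g a)) else 0

/-- The `g × k` matrix `X_k(a)` whose `(i,j)` entry (1-indexed) is `χ_{2i-j}(a)`. -/
noncomputable def Xmat (g : ℕ) (a : Fin g → ℂ) (k : ℕ) : Matrix (Fin g) (Fin k) ℂ :=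
  Matrix.of fun i j => chi g a (2 * ((i : ℕ) : ℤ) + 1 - ((j : ℕ) : ℤ))

/-- The `(g+1) × g` matrix `A(a)` with (1-indexed) `(i,j)` entry `χ_{i-2j+1}(a)`. -/
noncomputable def Amat (g : ℕ) (a : Fin g → ℂ) : Matrix (Fin (g + 1)) (Fin g) ℂ :=
  Matrix.of fun i j => chi g a (((i : ℕ) : ℤ) - 2 * ((j : ℕ) : ℤ))

/-- The `(g-1) × (g-1)` matrix `B(a)` with (1-indexed) `(i,j)` entry `χ_{g+i-2j}(a)`. -/
noncomputable def Bmat (g : ℕ) (a : Fin g → ℂ) : Matrix (Fin (g - 1)) (Fin (g - 1)) ℂ :=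
  Matrix.of fun i j => chi g a ((g : ℤ) + ((i : ℕ) : ℤ) - 2 * ((j : ℕ) : ℤ) - 1)

/-- The vector `φ(a) = (χ_{g+1}(a), …, χ_{2g-1}(a))`. -/
noncomputable def phiVec (g : ℕ) (a : Fin g → ℂ) : Fin (g - 1) → ℂ :=
  fun i => chi g a ((g : ℤ) + 1 + ((i : ℕ) : ℤ))

/-- The vector `c(a) ∈ ℂ^g` whose first entry is `1` and whose remaining `g-1`
entries form `-B(a)⁻¹·φ(a)`. -/
noncomputable def cVec (g : ℕ) (a : Fin g → ℂ) : Fin g → ℂ :=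
  fun j => if h : (j : ℕ) = 0 then 1
    else -(((Bmat g a)⁻¹).mulVec (phiVec g a)) ⟨(j : ℕ) - 1, by have := j.isLt; omega⟩

/-- The polynomial `f_g(t; a) = ∑_{n=0}^{2g-1} χ_n(a) t^n`. -/
noncomputable def fgPoly (g : ℕ) (a : Fin g → ℂ) : Polynomial ℂ :=
  ∑ n ∈ Finset.range (2 * g), Polynomial.C (chi g a (n : ℤ)) * Polynomial.X ^ n

private lemma chi_of_neg (g : ℕ) (a : Fin g → ℂ) {n : ℤ} (hn : n < 0) : chi g a n = 0 :=
  if_neg (by omega)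

private lemma chi_zero' (g : ℕ) (a : Fin g → ℂ) : chi g a 0 = 1 := by
  simp [chi, expPS]

private lemma coeff_sum_C_X (F : ℕ → ℂ) (N m : ℕ) :
    (∑ n ∈ Finset.range N, Polynomial.C (F n) * Polynomial.X ^ n).coeff m
      = if m < N then F m else 0 := by
  rw [Polynomial.finset_sum_coeff]
  simp only [Polynomial.coeff_C_mul, Polynomial.coeff_X_pow, mul_ite, mul_one, mul_zero]
  rw [Finset.sum_ite_eq]
  simp [Finset.mem_range]

private lemma fg_coeff (g : ℕ) (a : Fin g → ℂ) (m : ℕ) :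
    (fgPoly g a).coeff m = if m < 2 * g then chi g a (m : ℤ) else 0 :=
  coeff_sum_C_X (fun n => chi g a (n : ℤ)) (2 * g) m

private lemma b_rep (g : ℕ) (hg : 1 ≤ g) (b : Polynomial ℂ)
    (hdeg : b.degree ≤ ((2 * g - 2 : ℕ) : WithBot ℕ)) (hodd : ∀ m : ℕ, Odd m → b.coeff m = 0) :
    b = ∑ j ∈ Finset.range g, Polynomial.C (b.coeff (2 * j)) * Polynomial.X ^ (2 * j) := by
  ext m
  rw [Polynomial.finset_sum_coeff]
  simp only [Polynomial.coeff_C_mul, Polynomial.coeff_X_pow, mul_ite, mul_one, mul_zero]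
  rcases Nat.even_or_odd m with ⟨j, hj⟩ | hm
  · by_cases hjg : j < g
    · rw [Finset.sum_eq_single j]
      · rw [if_pos (by omega)]; congr 1; omega
      · intro k _ hk; rw [if_neg (by omega)]
      · intro h; exact absurd (Finset.mem_range.mpr hjg) h
    · rw [Finset.sum_eq_zero, Polynomial.coeff_eq_zero_of_degree_lt]
      · exact lt_of_le_of_lt hdeg (by exact_mod_cast (show 2*g-2 < m by omega))
      · intro k hk; rw [if_neg (by simp only [Finset.mem_range] at hk; omega)]
  · obtain ⟨r, hr⟩ := hm
    rw [hodd m ⟨r, hr⟩, Finset.sum_eq_zero]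
    intro k _; rw [if_neg (by omega)]

private lemma coeff_mul_key (g : ℕ) (hg : 1 ≤ g) (a : Fin g → ℂ) (b : Polynomial ℂ)
    (hdeg : b.degree ≤ ((2 * g - 2 : ℕ) : WithBot ℕ)) (hodd : ∀ m : ℕ, Odd m → b.coeff m = 0)
    {n : ℕ} (hn : n < 2 * g) :
    (fgPoly g a * b).coeff n
      = ∑ j ∈ Finset.range g, chi g a ((n : ℤ) - 2 * j) * b.coeff (2 * j) := by
  conv_lhs => rw [b_rep g hg b hdeg hodd]
  rw [Finset.mul_sum, Polynomial.finset_sum_coeff]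
  refine Finset.sum_congr rfl fun j hj => ?_
  rw [mul_left_comm, Polynomial.coeff_C_mul, Polynomial.coeff_mul_X_pow']
  by_cases h : 2 * j ≤ n
  · rw [if_pos h, fg_coeff, if_pos (by omega)]
    have hc : ((n - 2 * j : ℕ) : ℤ) = (n : ℤ) - 2 * (j : ℤ) := by omega
    rw [hc, mul_comm]
  · rw [if_neg h, mul_zero, chi_of_neg g a (by omega), zero_mul]

private lemma bcoeff_eq_cVec (g : ℕ) (hg : 1 ≤ g) (a : Fin g → ℂ) (hB : (Bmat g a).det ≠ 0)
    (b : Polynomial ℂ) (h0 : b.coeff 0 = 1)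
    (hdeg : b.degree ≤ ((2 * g - 2 : ℕ) : WithBot ℕ)) (hodd : ∀ m : ℕ, Odd m → b.coeff m = 0)
    (hvan : ∀ n : ℕ, g < n → n < 2 * g → (fgPoly g a * b).coeff n = 0) :
    ∀ j : Fin g, b.coeff (2 * (j : ℕ)) = cVec g a j := by
  set β : Fin (g - 1) → ℂ := fun j => b.coeff (2 * ((j : ℕ) + 1)) with hβdef
  have hrange : Finset.range g = Finset.range ((g - 1) + 1) := by congr 1; omega
  have hBv : (Bmat g a).mulVec β = -(phiVec g a) := by
    funext i
    have hi : (i : ℕ) < g - 1 := i.isLt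
    have hv := hvan (g + 1 + (i : ℕ)) (by omega) (by omega)
    rw [coeff_mul_key g hg a b hdeg hodd (by omega), hrange,
      Finset.sum_range_succ', Finset.sum_range] at hv
    simp only [Matrix.mulVec, dotProduct, Bmat, Matrix.of_apply, Pi.neg_apply, phiVec]
    have hre : ∀ j : Fin (g - 1), chi g a ((g : ℤ) + ((i : ℕ) : ℤ) - 2 * ((j : ℕ) : ℤ) - 1)
          * β j = chi g a (((g + 1 + (i : ℕ) : ℕ) : ℤ) - 2 * (((j : ℕ) + 1 : ℕ) : ℤ))
          * b.coeff (2 * ((j : ℕ) + 1)) := by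
      intro j; congr 2; push_cast; ring
    rw [Finset.sum_congr rfl (fun j _ => hre j)]
    have hϕ : chi g a ((g : ℤ) + 1 + ((i : ℕ) : ℤ))
        = chi g a (((g + 1 + (i : ℕ) : ℕ) : ℤ) - 2 * ((0 : ℕ) : ℤ)) := by
      congr 1
    rw [hϕ]
    have h00 : chi g a (((g + 1 + (i : ℕ) : ℕ) : ℤ) - 2 * ((0 : ℕ) : ℤ))
        * b.coeff (2 * 0) = chi g a (((g + 1 + (i : ℕ) : ℕ) : ℤ) - 2 * ((0 : ℕ) : ℤ)) := by
      rw [mul_zero, h0, mul_one]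
    linear_combination hv - h00
  have hβ : β = -((Bmat g a)⁻¹.mulVec (phiVec g a)) := by
    have h1 : (Bmat g a)⁻¹ * Bmat g a = 1 :=
      Matrix.nonsing_inv_mul _ (isUnit_iff_ne_zero.mpr hB)
    calc β = ((Bmat g a)⁻¹ * Bmat g a).mulVec β := by
            rw [h1, Matrix.one_mulVec]
      _ = (Bmat g a)⁻¹.mulVec ((Bmat g a).mulVec β) :=
            (Matrix.mulVec_mulVec _ _ _).symm
      _ = -((Bmat g a)⁻¹.mulVec (phiVec g a)) := by
            rw [hBv, Matrix.mulVec_neg]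
  intro j
  unfold cVec
  by_cases hj : (j : ℕ) = 0
  · rw [dif_pos hj, hj, mul_zero, h0]
  · rw [dif_neg hj]
    have hlt : (j : ℕ) - 1 < g - 1 := by have := j.isLt; omega
    have hc := congrFun hβ ⟨(j : ℕ) - 1, hlt⟩
    rw [hβdef] at hc
    simp only [Pi.neg_apply] at hc ⊢
    rw [← hc]
    show b.coeff (2 * (j : ℕ)) = b.coeff (2 * (((j : ℕ) - 1) + 1))
    congr 1; omega

private lemma van_of_coeffs (g : ℕ) (hg : 1 ≤ g) (a : Fin g → ℂ) (hB : (Bmat g a).det ≠ 0)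
    (b : Polynomial ℂ)
    (hdeg : b.degree ≤ ((2 * g - 2 : ℕ) : WithBot ℕ)) (hodd : ∀ m : ℕ, Odd m → b.coeff m = 0)
    (hcoef : ∀ j : Fin g, b.coeff (2 * (j : ℕ)) = cVec g a j) :
    ∀ n : ℕ, g < n → n < 2 * g → (fgPoly g a * b).coeff n = 0 := by
  intro n hn1 hn2
  have hrange : Finset.range g = Finset.range ((g - 1) + 1) := by congr 1; omega
  rw [coeff_mul_key g hg a b hdeg hodd (by omega), hrange, Finset.sum_range_succ',
    Finset.sum_range]
  set i : Fin (g - 1) := ⟨n - g - 1, by omega⟩ with hidef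
  have hmul : Bmat g a * (Bmat g a)⁻¹ = 1 := Matrix.mul_nonsing_inv _ (isUnit_iff_ne_zero.mpr hB)
  set v : Fin (g - 1) → ℂ := (Bmat g a)⁻¹.mulVec (phiVec g a) with hvdef
  have hphi : (Bmat g a).mulVec v = phiVec g a := by
    rw [hvdef, Matrix.mulVec_mulVec, hmul, Matrix.one_mulVec]
  have hphi' := congrFun hphi i
  simp only [Matrix.mulVec, dotProduct, Bmat, Matrix.of_apply, phiVec] at hphi'
  have hre : ∀ j : Fin (g - 1),
      chi g a ((n : ℤ) - 2 * (((j : ℕ) + 1 : ℕ) : ℤ)) * b.coeff (2 * ((j : ℕ) + 1))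
        = -(chi g a ((g : ℤ) + ((i : ℕ) : ℤ) - 2 * ((j : ℕ) : ℤ) - 1) * v j) := by
    intro j
    have h1 : b.coeff (2 * ((j : ℕ) + 1)) = cVec g a ⟨(j : ℕ) + 1, by have := j.isLt; omega⟩ := by
      have := hcoef ⟨(j : ℕ) + 1, by have := j.isLt; omega⟩
      simpa using this
    rw [h1]
    unfold cVec
    rw [dif_neg (by simp)]
    have h2 : chi g a ((n : ℤ) - 2 * (((j : ℕ) + 1 : ℕ) : ℤ))
        = chi g a ((g : ℤ) + ((i : ℕ) : ℤ) - 2 * ((j : ℕ) : ℤ) - 1) := by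
      congr 1; simp only [hidef]; push_cast [Nat.cast_sub]; omega
    rw [h2]
    have h3 : (⟨(j : ℕ) + 1 - 1, by have := j.isLt; omega⟩ : Fin (g - 1)) = j := by
      apply Fin.ext; simp
    rw [h3]
    ring
  rw [Finset.sum_congr rfl (fun j _ => hre j)]
  have h0 : b.coeff (2 * 0) = 1 := by
    have := hcoef ⟨0, by omega⟩
    rw [this]; unfold cVec; rw [dif_pos rfl]
  have h4 : chi g a ((n : ℤ) - 2 * ((0 : ℕ) : ℤ)) = chi g a ((g : ℤ) + 1 + ((i : ℕ) : ℤ)) := by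
    congr 1; simp only [hidef]; push_cast; omega
  rw [h0, mul_one, h4, Finset.sum_neg_distrib]
  linear_combination -hphi'

noncomputable def bPoly (g : ℕ) (a : Fin g → ℂ) : Polynomial ℂ :=
  ∑ j : Fin g, Polynomial.C (cVec g a j) * Polynomial.X ^ (2 * (j : ℕ))

private lemma bPoly_coeff_even (g : ℕ) (a : Fin g → ℂ) (j : Fin g) :
    (bPoly g a).coeff (2 * (j : ℕ)) = cVec g a j := by
  unfold bPoly
  rw [Polynomial.finset_sum_coeff]
  simp only [Polynomial.coeff_C_mul, Polynomial.coeff_X_pow, mul_ite, mul_one, mul_zero]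
  rw [Finset.sum_eq_single j]
  · rw [if_pos rfl]
  · intro k _ hk
    rw [if_neg]
    intro hc
    exact hk (Fin.ext (by omega))
  · intro h; exact absurd (Finset.mem_univ j) h

private lemma bPoly_coeff_odd (g : ℕ) (a : Fin g → ℂ) (m : ℕ) (hm : Odd m) :
    (bPoly g a).coeff m = 0 := by
  unfold bPoly
  rw [Polynomial.finset_sum_coeff]
  refine Finset.sum_eq_zero fun k _ => ?_
  simp only [Polynomial.coeff_C_mul, Polynomial.coeff_X_pow, mul_ite, mul_one, mul_zero]
  obtain ⟨r, hr⟩ := hm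
  rw [if_neg (by omega)]

private lemma bPoly_degree (g : ℕ) (hg : 1 ≤ g) (a : Fin g → ℂ) :
    (bPoly g a).degree ≤ ((2 * g - 2 : ℕ) : WithBot ℕ) := by
  refine (Polynomial.degree_sum_le _ _).trans ?_
  refine Finset.sup_le fun j _ => ?_
  refine (Polynomial.degree_C_mul_X_pow_le _ _).trans ?_
  exact_mod_cast (show 2 * (j : ℕ) ≤ 2 * g - 2 by have := j.isLt; omega)

private lemma bPoly_coeff_zero (g : ℕ) (hg : 1 ≤ g) (a : Fin g → ℂ) :
    (bPoly g a).coeff 0 = 1 := by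
  have := bPoly_coeff_even g a ⟨0, hg⟩
  simp only [mul_zero] at this
  rw [this]
  unfold cVec
  rw [dif_pos rfl]

noncomputable def pPoly (g : ℕ) (a : Fin g → ℂ) : Polynomial ℂ :=
  ∑ n ∈ Finset.range (g + 1), Polynomial.C ((fgPoly g a * bPoly g a).coeff n) * Polynomial.X ^ n

private lemma pPoly_coeff (g : ℕ) (a : Fin g → ℂ) (m : ℕ) :
    (pPoly g a).coeff m = if m < g + 1 then (fgPoly g a * bPoly g a).coeff m else 0 :=
  coeff_sum_C_X (fun n => (fgPoly g a * bPoly g a).coeff n) (g + 1) m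

private lemma pPoly_degree (g : ℕ) (a : Fin g → ℂ) :
    (pPoly g a).degree ≤ (g : WithBot ℕ) := by
  refine (Polynomial.degree_sum_le _ _).trans ?_
  refine Finset.sup_le fun n hn => ?_
  refine (Polynomial.degree_C_mul_X_pow_le _ _).trans ?_
  exact_mod_cast (show n ≤ g by simp only [Finset.mem_range] at hn; omega)

theorem stmt_9 (g : ℕ) (hg : 1 ≤ g) (a : Fin g → ℂ) (hB : (Bmat g a).det ≠ 0) :
    (∃! pb : Polynomial ℂ × Polynomial ℂ,
      (pb.1.degree ≤ (g : WithBot ℕ) ∧ pb.1.coeff 0 = 1) ∧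
      (pb.2.coeff 0 = 1 ∧ pb.2.degree ≤ ((2 * g - 2 : ℕ) : WithBot ℕ) ∧
        ∀ m : ℕ, Odd m → pb.2.coeff m = 0) ∧
      (∀ n : ℕ, n < 2 * g → pb.1.coeff n = (fgPoly g a * pb.2).coeff n)) ∧
    (∀ pb : Polynomial ℂ × Polynomial ℂ,
      ((pb.1.degree ≤ (g : WithBot ℕ) ∧ pb.1.coeff 0 = 1) ∧
       (pb.2.coeff 0 = 1 ∧ pb.2.degree ≤ ((2 * g - 2 : ℕ) : WithBot ℕ) ∧
         ∀ m : ℕ, Odd m → pb.2.coeff m = 0) ∧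
       (∀ n : ℕ, n < 2 * g → pb.1.coeff n = (fgPoly g a * pb.2).coeff n)) →
      ∀ i : Fin (g + 1),
        pb.1.coeff (i : ℕ) = (Amat g a).mulVec (cVec g a) i) := by
  have hbdeg := bPoly_degree g hg a
  have hbodd := bPoly_coeff_odd g a
  have hb0 := bPoly_coeff_zero g hg a
  have hvan0 : ∀ n : ℕ, g < n → n < 2 * g → (fgPoly g a * bPoly g a).coeff n = 0 :=
    van_of_coeffs g hg a hB (bPoly g a) hbdeg hbodd (bPoly_coeff_even g a)
  have hcong0 : ∀ n : ℕ, n < 2 * g → (pPoly g a).coeff n = (fgPoly g a * bPoly g a).coeff n := by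
    intro n hn
    rw [pPoly_coeff]
    by_cases h : n < g + 1
    · rw [if_pos h]
    · rw [if_neg h, hvan0 n (by omega) hn]
  have hp0 : (pPoly g a).coeff 0 = 1 := by
    rw [hcong0 0 (by omega), Polynomial.mul_coeff_zero, hb0, mul_one, fg_coeff,
      if_pos (by omega)]
    norm_num [chi_zero']
  constructor
  · refine ⟨(pPoly g a, bPoly g a), ⟨⟨pPoly_degree g a, hp0⟩, ⟨hb0, hbdeg, hbodd⟩, hcong0⟩, ?_⟩
    rintro ⟨p, b⟩ ⟨⟨hdp, hp0'⟩, ⟨hb0', hdb, hob⟩, hcg⟩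
    have hvan' : ∀ n : ℕ, g < n → n < 2 * g → (fgPoly g a * b).coeff n = 0 := by
      intro n h1 h2
      rw [← hcg n h2]
      exact Polynomial.coeff_eq_zero_of_degree_lt (lt_of_le_of_lt hdp (by exact_mod_cast h1))
    have hco := bcoeff_eq_cVec g hg a hB b hb0' hdb hob hvan'
    have hbeq : b = bPoly g a := by
      ext m
      rcases Nat.even_or_odd m with ⟨r, hr⟩ | hm
      · by_cases hrg : r < g
        · have h1 : b.coeff (2 * r) = cVec g a ⟨r, hrg⟩ := hco ⟨r, hrg⟩
          have h2 : (bPoly g a).coeff (2 * r) = cVec g a ⟨r, hrg⟩ := bPoly_coeff_even g a ⟨r, hrg⟩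
          have hmr : m = 2 * r := by omega
          rw [hmr, h1, h2]
        · rw [Polynomial.coeff_eq_zero_of_degree_lt
              (lt_of_le_of_lt hdb (by exact_mod_cast (show 2 * g - 2 < m by omega))),
            Polynomial.coeff_eq_zero_of_degree_lt
              (lt_of_le_of_lt hbdeg (by exact_mod_cast (show 2 * g - 2 < m by omega)))]
      · rw [hob m hm, bPoly_coeff_odd g a m hm]
    have hpeq : p = pPoly g a := by
      ext n
      by_cases hn : n < g + 1
      · rw [hcg n (by omega), hbeq, hcong0 n (by omega)]
      · rw [Polynomial.coeff_eq_zero_of_degree_lt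
            (lt_of_le_of_lt hdp (by exact_mod_cast (show g < n by omega))),
          Polynomial.coeff_eq_zero_of_degree_lt
            (lt_of_le_of_lt (pPoly_degree g a) (by exact_mod_cast (show g < n by omega)))]
    rw [Prod.mk.injEq]
    exact ⟨hpeq, hbeq⟩
  · rintro ⟨p, b⟩ ⟨⟨hdp, hp0'⟩, ⟨hb0', hdb, hob⟩, hcg⟩ i
    have hvan' : ∀ n : ℕ, g < n → n < 2 * g → (fgPoly g a * b).coeff n = 0 := by
      intro n h1 h2
      rw [← hcg n h2]
      exact Polynomial.coeff_eq_zero_of_degree_lt (lt_of_le_of_lt hdp (by exact_mod_cast h1))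
    have hco := bcoeff_eq_cVec g hg a hB b hb0' hdb hob hvan'
    have hi2 : (i : ℕ) < 2 * g := by have := i.isLt; omega
    rw [hcg (i : ℕ) hi2, coeff_mul_key g hg a b hdb hob hi2, Finset.sum_range]
    simp only [Matrix.mulVec, dotProduct, Amat, Matrix.of_apply]
    refine Finset.sum_congr rfl fun j _ => ?_
    rw [hco j]
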